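/- Let U be an adapted integrable process in discrete time over {0,...,T}, Z its Snell envelope. Define the stopping time τ* = min{ t ≥ 0 : Z_t = U_t }. Then the stopped process (Z_{t ∧ τ*})_{0≤t≤T} is a martingale, and consequently Z_0 = E[U_{τ*}] = sup over all stopping times τ of E[U_τ]. -/

import Mathlib

open MeasureTheory Filter

/-- The discrete-time Snell envelope over `{0,…,T}`, defined by backward
recursion `Z_T = U_T`, `Z_t = max (U_t) (E[Z_{t+1} | ℱ_t])`. -/
noncomputable def snellAux {Ω : Type*} {m0 : MeasurableSpace Ω} (μ : Measure Ω)
    (ℱ : MeasureTheory.Filtration ℕ m0) (U : ℕ → Ω → ℝ) (T : ℕ) : ℕ → Ω → ℝ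
  | 0 => U T
  | (k + 1) => fun ω =>
      max (U (T - (k + 1)) ω) ((μ[snellAux μ ℱ U T k | ℱ (T - (k + 1))]) ω)

noncomputable def snell {Ω : Type*} {m0 : MeasurableSpace Ω} (μ : Measure Ω)
    (ℱ : MeasureTheory.Filtration ℕ m0) (U : ℕ → Ω → ℝ) (T : ℕ) (t : ℕ) : Ω → ℝ :=
  snellAux μ ℱ U T (T - t)

/-- The first time the Snell envelope meets the reward process (well defined
since `Z_T = U_T`). -/
noncomputable def snellHit {Ω : Type*} {m0 : MeasurableSpace Ω} (μ : Measure Ω)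
    (ℱ : MeasureTheory.Filtration ℕ m0) (U : ℕ → Ω → ℝ) (T : ℕ) (ω : Ω) : ℕ :=
  sInf {t | snell μ ℱ U T t ω = U t ω}

section SnellLemmas

variable {Ω : Type*} {m0 : MeasurableSpace Ω} {μ : Measure Ω} [IsProbabilityMeasure μ]
  {ℱ : MeasureTheory.Filtration ℕ m0} {T : ℕ} {U : ℕ → Ω → ℝ}

lemma snell_of_ge {t : ℕ} (h : T ≤ t) : snell μ ℱ U T t = U T := by
  unfold snell
  rw [Nat.sub_eq_zero_of_le h]
  rfl

lemma snellAux_integrable (hint : ∀ t, Integrable (U t) μ) :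
    ∀ k, Integrable (snellAux μ ℱ U T k) μ := by
  intro k
  induction k with
  | zero => exact hint T
  | succ k ih => exact (hint (T - (k + 1))).sup integrable_condExp

lemma snell_integrable (hint : ∀ t, Integrable (U t) μ) (t : ℕ) :
    Integrable (snell μ ℱ U T t) μ := snellAux_integrable hint _

lemma snellAux_stronglyMeasurable (hadp : Adapted ℱ U) :
    ∀ k, StronglyMeasurable[ℱ (T - k)] (snellAux μ ℱ U T k) := by
  intro k
  induction k with
  | zero => exact (hadp T).stronglyMeasurable
  | succ k ih =>
    show StronglyMeasurable[ℱ (T - (k + 1))] fun ω =>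
      max (U (T - (k + 1)) ω) ((μ[snellAux μ ℱ U T k | ℱ (T - (k + 1))]) ω)
    exact ((hadp (T - (k + 1))).max
      (stronglyMeasurable_condExp).measurable).stronglyMeasurable

lemma snell_stronglyMeasurable (hadp : Adapted ℱ U) (t : ℕ) :
    StronglyMeasurable[ℱ t] (snell μ ℱ U T t) := by
  have h := snellAux_stronglyMeasurable (μ := μ) (T := T) hadp (T - t)
  exact h.mono (ℱ.mono (by omega))

lemma snell_adapted (hadp : Adapted ℱ U) : StronglyAdapted ℱ (snell μ ℱ U T) :=
  fun t => snell_stronglyMeasurable hadp t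

lemma snell_rec {t : ℕ} (h : t < T) :
    snell μ ℱ U T t = fun ω => max (U t ω) ((μ[snell μ ℱ U T (t + 1) | ℱ t]) ω) := by
  unfold snell
  have h1 : T - t = (T - (t + 1)) + 1 := by omega
  rw [h1]
  show (fun ω => max (U (T - (T - (t + 1) + 1)) ω)
      ((μ[snellAux μ ℱ U T (T - (t + 1)) | ℱ (T - (T - (t + 1) + 1))]) ω)) = _
  have h2 : T - (T - (t + 1) + 1) = t := by omega
  rw [h2]

lemma snell_ge_U {t : ℕ} (h : t ≤ T) (ω : Ω) : U t ω ≤ snell μ ℱ U T t ω := by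
  rcases eq_or_lt_of_le h with h' | h'
  · rw [h', snell_of_ge le_rfl]
  · rw [snell_rec h']
    exact le_max_left _ _

lemma snellHit_mem_T (ω : Ω) : T ∈ {t | snell μ ℱ U T t ω = U t ω} := by
  simp [snell_of_ge (le_refl T)]

lemma snellHit_le_T (ω : Ω) : snellHit μ ℱ U T ω ≤ T :=
  Nat.sInf_le (snellHit_mem_T ω)

lemma snellHit_spec (ω : Ω) :
    snell μ ℱ U T (snellHit μ ℱ U T ω) ω = U (snellHit μ ℱ U T ω) ω :=
  Nat.sInf_mem ⟨T, snellHit_mem_T ω⟩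

lemma snellHit_isStoppingTime (hadp : Adapted ℱ U) :
    IsStoppingTime ℱ (fun ω => (snellHit μ ℱ U T ω : WithTop ℕ)) := by
  intro n
  simp only [WithTop.coe_le_coe, ← WithTop.coe_natCast, Nat.cast_id]
  have heq : {ω | snellHit μ ℱ U T ω ≤ n}
      = ⋃ k ∈ Finset.range (n + 1), {ω | snell μ ℱ U T k ω = U k ω} := by
    ext ω
    simp only [Set.mem_setOf_eq, Set.mem_iUnion, Finset.mem_range, Nat.lt_succ_iff]
    constructor
    · intro h
      exact ⟨snellHit μ ℱ U T ω, h, snellHit_spec ω⟩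
    · rintro ⟨k, hk, hmem⟩
      exact le_trans (Nat.sInf_le hmem) hk
  rw [heq]
  refine MeasurableSet.biUnion (Finset.range (n + 1)).countable_toSet ?_
  intro k hk
  replace hk : k ≤ n := Nat.lt_succ_iff.mp (Finset.mem_range.mp (Finset.mem_coe.mp hk))
  exact MeasureTheory.StronglyMeasurable.measurableSet_eq_fun
    ((snell_stronglyMeasurable hadp k).mono (ℱ.mono hk))
    ((hadp k).stronglyMeasurable.mono (ℱ.mono hk))

lemma snell_supermartingale (hadp : Adapted ℱ U) (hint : ∀ t, Integrable (U t) μ) :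
    Supermartingale (snell μ ℱ U T) ℱ μ := by
  refine supermartingale_nat (snell_adapted hadp) (snell_integrable hint) fun i => ?_
  rcases lt_or_ge i T with h | h
  · rw [snell_rec h]
    exact Eventually.of_forall fun ω => le_max_right _ _
  · have e1 : snell μ ℱ U T (i + 1) = U T := snell_of_ge (by omega)
    have e2 : snell μ ℱ U T i = U T := snell_of_ge h
    rw [e1, e2, condExp_of_stronglyMeasurable (ℱ.le i)
      ((hadp T).stronglyMeasurable.mono (ℱ.mono h)) (hint T)]

lemma stoppedProcess_coe_apply (u : ℕ → Ω → ℝ) (τ : Ω → ℕ) (j : ℕ) (ω : Ω) :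
    MeasureTheory.stoppedProcess u (fun ω => (τ ω : WithTop ℕ)) j ω = u (min j (τ ω)) ω := by
  unfold MeasureTheory.stoppedProcess
  simp only [← WithTop.coe_natCast, Nat.cast_id]
  rw [← WithTop.coe_min]
  rfl

lemma snell_stoppedProcess_martingale (hadp : Adapted ℱ U) (hint : ∀ t, Integrable (U t) μ) :
    Martingale (MeasureTheory.stoppedProcess (snell μ ℱ U T)
      (fun ω => (snellHit μ ℱ U T ω : WithTop ℕ))) ℱ μ := by
  have hτ : IsStoppingTime ℱ (fun ω => (snellHit μ ℱ U T ω : WithTop ℕ)) :=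
    snellHit_isStoppingTime hadp
  refine martingale_nat ((snell_adapted hadp).stoppedProcess_of_discrete hτ)
    (fun n => integrable_stoppedProcess hτ (snell_integrable hint) n) fun i => ?_
  set Z := snell μ ℱ U T with hZ
  set τ := snellHit μ ℱ U T with hτdef
  set Y := MeasureTheory.stoppedProcess Z (fun ω => (τ ω : WithTop ℕ)) with hY
  have hA : MeasurableSet[ℱ i] {ω | i + 1 ≤ τ ω} := by
    have := (hτ i).compl
    convert this using 1
    ext ω
    simp only [Set.mem_setOf_eq, Set.mem_compl_iff, ← WithTop.coe_natCast, Nat.cast_id,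
      WithTop.coe_le_coe]
    omega
  have hg_int : Integrable (Z (i + 1) - Z i) μ :=
    (snell_integrable hint _).sub (snell_integrable hint _)
  have hdecomp : Y (i + 1) = Y i + Set.indicator {ω | i + 1 ≤ τ ω} (Z (i + 1) - Z i) := by
    funext ω
    rw [Pi.add_apply, hY, stoppedProcess_coe_apply, stoppedProcess_coe_apply]
    by_cases h : i + 1 ≤ τ ω
    · have hm : ω ∈ {ω | i + 1 ≤ τ ω} := h
      rw [Set.indicator_of_mem hm, Pi.sub_apply, min_eq_left h,
        min_eq_left (by omega : i ≤ τ ω)]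
      ring
    · have hm : ω ∉ {ω | i + 1 ≤ τ ω} := h
      rw [Set.indicator_of_notMem hm, min_eq_right (by omega : τ ω ≤ i + 1),
        min_eq_right (by omega : τ ω ≤ i), add_zero]
  have hYi_int : Integrable (Y i) μ := integrable_stoppedProcess hτ (snell_integrable hint) i
  have hind_int : Integrable (Set.indicator {ω | i + 1 ≤ τ ω} (Z (i + 1) - Z i)) μ :=
    hg_int.indicator (ℱ.le i _ hA)
  have step1 : μ[Y (i + 1) | ℱ i]
      =ᵐ[μ] μ[Y i | ℱ i] + μ[Set.indicator {ω | i + 1 ≤ τ ω} (Z (i + 1) - Z i) | ℱ i] := by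
    rw [hdecomp]
    exact condExp_add hYi_int hind_int _
  have step2 : μ[Y i | ℱ i] = Y i :=
    condExp_of_stronglyMeasurable (ℱ.le i)
      (((snell_adapted hadp).stoppedProcess_of_discrete hτ) i) hYi_int
  have step3 : μ[Set.indicator {ω | i + 1 ≤ τ ω} (Z (i + 1) - Z i) | ℱ i]
      =ᵐ[μ] Set.indicator {ω | i + 1 ≤ τ ω} (μ[Z (i + 1) - Z i | ℱ i]) :=
    condExp_indicator hg_int hA
  have step4 : μ[Z (i + 1) - Z i | ℱ i] =ᵐ[μ] μ[Z (i + 1) | ℱ i] - Z i := by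
    refine (condExp_sub (snell_integrable hint _) (snell_integrable hint _) _).trans ?_
    have : μ[Z i | ℱ i] = Z i :=
      condExp_of_stronglyMeasurable (ℱ.le i) (snell_adapted hadp i) (snell_integrable hint i)
    rw [this]
  have step5 : Set.indicator {ω | i + 1 ≤ τ ω} (μ[Z (i + 1) | ℱ i] - Z i) = 0 := by
    funext ω
    by_cases h : i + 1 ≤ τ ω
    · have hiT : i < T := by
        have := snellHit_le_T (μ := μ) (ℱ := ℱ) (U := U) (T := T) ω
        rw [← hτdef] at this
        omega
      have hne : Z i ω ≠ U i ω := by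
        intro hc
        exact Nat.notMem_of_lt_sInf (by omega : i < τ ω) hc
      have hrec : Z i ω = max (U i ω) ((μ[Z (i + 1) | ℱ i]) ω) := by
        rw [hZ, snell_rec hiT]
      have : Z i ω = (μ[Z (i + 1) | ℱ i]) ω := by
        rcases max_choice (U i ω) ((μ[Z (i + 1) | ℱ i]) ω) with hm | hm
        · exact absurd (hrec.trans hm) hne
        · exact hrec.trans hm
      have hm : ω ∈ {ω | i + 1 ≤ τ ω} := h
      rw [Set.indicator_of_mem hm, Pi.sub_apply, Pi.zero_apply, this, sub_self]
    · have hm : ω ∉ {ω | i + 1 ≤ τ ω} := h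
      rw [Set.indicator_of_notMem hm, Pi.zero_apply]
  calc Y i = Y i + 0 := by rw [add_zero]
    _ =ᵐ[μ] μ[Y i | ℱ i] + μ[Set.indicator {ω | i + 1 ≤ τ ω} (Z (i + 1) - Z i) | ℱ i] := by
        rw [step2]
        refine EventuallyEq.add (EventuallyEq.refl _ _) ?_
        refine ((step3.trans ?_)).symm
        calc Set.indicator {ω | i + 1 ≤ τ ω} (μ[Z (i + 1) - Z i | ℱ i])
            =ᵐ[μ] Set.indicator {ω | i + 1 ≤ τ ω} (μ[Z (i + 1) | ℱ i] - Z i) := by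
              filter_upwards [step4] with ω hω
              by_cases h : ω ∈ {ω | i + 1 ≤ τ ω}
              · rw [Set.indicator_of_mem h, Set.indicator_of_mem h, hω]
              · rw [Set.indicator_of_notMem h, Set.indicator_of_notMem h]
          _ = 0 := step5
    _ =ᵐ[μ] μ[Y (i + 1) | ℱ i] := step1.symm

end SnellLemmas

/-- Optimality of the first hitting time `τ* = min{t : Z_t = U_t}`: the stopped
Snell envelope `(Z_{t ∧ τ*})_t` is a martingale, and consequently
`E[Z_0] = E[U_{τ*}]`, which is the largest value of `E[U_τ]` over all stopping
times `τ ≤ T`. -/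
theorem stmt9 {Ω : Type*} {m0 : MeasurableSpace Ω} (μ : Measure Ω) [IsProbabilityMeasure μ]
    (ℱ : MeasureTheory.Filtration ℕ m0) (T : ℕ)
    (U : ℕ → Ω → ℝ) (hadp : Adapted ℱ U) (hint : ∀ t, Integrable (U t) μ) :
    Martingale (fun t ω => snell μ ℱ U T (min t (snellHit μ ℱ U T ω)) ω) ℱ μ ∧
      ∫ ω, snell μ ℱ U T 0 ω ∂μ = ∫ ω, U (snellHit μ ℱ U T ω) ω ∂μ ∧
      IsGreatest
        {r | ∃ τ : Ω → ℕ, IsStoppingTime ℱ (fun ω => (τ ω : WithTop ℕ)) ∧ (∀ ω, τ ω ≤ T) ∧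
          r = ∫ ω, U (τ ω) ω ∂μ}
        (∫ ω, U (snellHit μ ℱ U T ω) ω ∂μ) := by
  set Z := snell μ ℱ U T with hZ
  set τ := snellHit μ ℱ U T with hτdef
  have hτ : IsStoppingTime ℱ (fun ω => (τ ω : WithTop ℕ)) := snellHit_isStoppingTime hadp
  have hmart : Martingale (MeasureTheory.stoppedProcess Z (fun ω => (τ ω : WithTop ℕ))) ℱ μ :=
    snell_stoppedProcess_martingale hadp hint
  have hmart' : Martingale (fun t ω => Z (min t (τ ω)) ω) ℱ μ := by
    convert hmart using 1
    funext t ω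
    rw [stoppedProcess_coe_apply]
  -- second part
  have hint0 : ∫ ω, Z 0 ω ∂μ = ∫ ω, U (τ ω) ω ∂μ := by
    have h0 : MeasureTheory.stoppedProcess Z (fun ω => (τ ω : WithTop ℕ)) 0 = Z 0 := by
      funext ω
      rw [stoppedProcess_coe_apply]
      simp
    have hT : MeasureTheory.stoppedProcess Z (fun ω => (τ ω : WithTop ℕ)) T = fun ω => U (τ ω) ω := by
      funext ω
      have hmin : min T (τ ω) = τ ω := min_eq_right (snellHit_le_T ω)
      rw [stoppedProcess_coe_apply, hmin]
      exact snellHit_spec ω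
    have hc := hmart.condExp_ae_eq (Nat.zero_le T)
    have := integral_condExp (ℱ.le 0)
      (f := MeasureTheory.stoppedProcess Z (fun ω => (τ ω : WithTop ℕ)) T) (μ := μ)
    calc ∫ ω, Z 0 ω ∂μ = ∫ ω, MeasureTheory.stoppedProcess Z (fun ω => (τ ω : WithTop ℕ)) 0 ω ∂μ := by rw [h0]
      _ = ∫ ω, (μ[MeasureTheory.stoppedProcess Z (fun ω => (τ ω : WithTop ℕ)) T | ℱ 0]) ω ∂μ :=
          (integral_congr_ae hc).symm
      _ = ∫ ω, MeasureTheory.stoppedProcess Z (fun ω => (τ ω : WithTop ℕ)) T ω ∂μ := this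
      _ = ∫ ω, U (τ ω) ω ∂μ := by rw [hT]
  refine ⟨hmart', hint0, ⟨⟨τ, hτ, fun ω => snellHit_le_T ω, rfl⟩, ?_⟩⟩
  rintro r ⟨σ, hσ, hσT, rfl⟩
  have hsub : Submartingale (-Z) ℱ μ := (snell_supermartingale hadp hint).neg
  have hosm := hsub.expected_stoppedValue_mono (isStoppingTime_const ℱ 0) hσ
    (fun ω => WithTop.coe_le_coe.mpr (Nat.zero_le _)) (N := T) (fun ω => WithTop.coe_le_coe.mpr (hσT ω))
  have hneg : ∀ (π : Ω → WithTop ℕ), stoppedValue (-Z) π = -(stoppedValue Z π) := fun π => rfl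
  rw [hneg, hneg] at hosm
  simp only [Pi.neg_apply] at hosm
  rw [integral_neg, integral_neg, neg_le_neg_iff] at hosm
  have hiU : Integrable (stoppedValue U (fun ω => (σ ω : WithTop ℕ))) μ :=
    integrable_stoppedValue (ι := ℕ) hσ hint (N := T) (fun ω => WithTop.coe_le_coe.mpr (hσT ω))
  have hiZ : Integrable (stoppedValue Z (fun ω => (σ ω : WithTop ℕ))) μ :=
    integrable_stoppedValue (ι := ℕ) hσ (snell_integrable hint) (N := T)
      (fun ω => WithTop.coe_le_coe.mpr (hσT ω))
  have hstep1 : ∫ ω, U (σ ω) ω ∂μ ≤ ∫ ω, Z (σ ω) ω ∂μ := by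
    refine integral_mono_ae hiU hiZ (Eventually.of_forall fun ω => snell_ge_U (hσT ω) ω)
  have hstep2 : ∫ ω, Z (σ ω) ω ∂μ ≤ ∫ ω, Z 0 ω ∂μ := by
    have h1 : stoppedValue Z (fun ω => (σ ω : WithTop ℕ)) = fun ω => Z (σ ω) ω := by
        funext ω
        simp only [stoppedValue, ← WithTop.coe_natCast, Nat.cast_id]
        rfl
    have h2 : stoppedValue Z (fun _ => WithTop.some (0 : ℕ)) = Z 0 := rfl
    rw [h1, h2] at hosm
    exact hosm
  calc ∫ ω, U (σ ω) ω ∂μ ≤ ∫ ω, Z 0 ω ∂μ := hstep1.trans hstep2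
    _ = ∫ ω, U (τ ω) ω ∂μ := hint0
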